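/- Fix h₀ > 1 and a continuous nonincreasing h : [0,1] → [1,h₀] with h(t) = h₀ for t ∈ [0,1/2] and h(1) = 1. For j ≥ 1 define f_j : [0,2] → [1,h₀] by f_j(t) = h(j·t) for t ∈ [0, 1/j] and f_j(t) = 1 for t ∈ (1/j, 2]. Let X be a compact length space and let d̂_j denote the null distance of the warped product [0,2] ×_{f_j} X. Then the null distances converge uniformly to the null distance of the Lorentzian product: sup_{p,q ∈ [0,2]×X} |d̂_j(p,q) − d̂_σ(p,q)| → 0 as j → ∞, where d̂_σ((s,x),(t,y)) = max(|s − t|, d(x,y)). (Thus uniform convergence of the warping functions is not necessary for uniform convergence of the null distances.) -/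

import Mathlib

open MeasureTheory
open scoped ENNReal

/-- Causal relation of the warped product `I ×_f X`: `(s,x) ≼_f (t,y)` iff `s ≤ t` and
`d(x,y) ≤ ∫_s^t f(u)⁻¹ du`. -/
def WPCausal {X : Type*} [MetricSpace X] (f : ℝ → ℝ) (p q : ℝ × X) : Prop :=
  p.1 ≤ q.1 ∧
    ENNReal.ofReal (dist p.2 q.2) ≤ ∫⁻ u in Set.Ioc p.1 q.1, ENNReal.ofReal ((f u)⁻¹)

/-- `σ` is a piecewise causal chain with `n+1` segments from `p` to `q` inside `I × X`. -/
def WPChain {X : Type*} [MetricSpace X] (I : Set ℝ) (f : ℝ → ℝ) (p q : ℝ × X) (n : ℕ)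
    (σ : ℕ → ℝ × X) : Prop :=
  σ 0 = p ∧ σ (n + 1) = q ∧ (∀ i ≤ n + 1, (σ i).1 ∈ I) ∧
    ∀ i ≤ n, WPCausal f (σ i) (σ (i + 1)) ∨ WPCausal f (σ (i + 1)) (σ i)

/-- The null distance of the warped product `I ×_f X`. -/
noncomputable def nullDist {X : Type*} [MetricSpace X] (I : Set ℝ) (f : ℝ → ℝ)
    (p q : ℝ × X) : ℝ :=
  sInf { r | ∃ n σ, WPChain I f p q n σ ∧
    r = ∑ i ∈ Finset.range (n + 1), |(σ (i + 1)).1 - (σ i).1| }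

/-- The warping functions of the example: `f_j(t) = h(j·t)` for `t ∈ [0,1/j]` and
`f_j(t) = 1` for `t ∈ (1/j,2]`. -/
noncomputable def warpSeq (h : ℝ → ℝ) (j : ℕ) : ℝ → ℝ :=
  fun t => if t ≤ 1 / (j : ℝ) then h ((j : ℝ) * t) else 1

lemma int_ge (h : ℝ → ℝ) (j : ℕ) (a b : ℝ) (h0 : 0 ≤ a) :
    ENNReal.ofReal (b - a - 1 / j) ≤ ∫⁻ u in Set.Ioc a b, ENNReal.ofReal ((warpSeq h j u)⁻¹) := by
  have hj0 : (0:ℝ) ≤ 1 / j := by positivity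
  rcases le_or_gt b (max a (1 / (j:ℝ))) with hbc | hcb
  · have : b - a - 1 / j ≤ 0 := by
      rcases max_cases a (1 / (j:ℝ)) with ⟨h1, h2⟩ | ⟨h1, h2⟩ <;> rw [h1] at hbc <;> linarith
    rw [ENNReal.ofReal_eq_zero.2 this]
    exact zero_le
  · have h1 : ENNReal.ofReal (b - a - 1/j) ≤ ENNReal.ofReal (b - max a (1 / (j:ℝ))) := by
      apply ENNReal.ofReal_le_ofReal
      have : max a (1/(j:ℝ)) ≤ a + 1/j := max_le (by linarith) (by linarith)
      linarith
    refine h1.trans ?_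
    have h2 : ENNReal.ofReal (b - max a (1/(j:ℝ))) =
        ∫⁻ _ in Set.Ioc (max a (1/(j:ℝ))) b, (1 : ℝ≥0∞) := by
      rw [setLIntegral_one, Real.volume_Ioc]
    rw [h2]
    have h3 : (∫⁻ _ in Set.Ioc (max a (1/(j:ℝ))) b, (1 : ℝ≥0∞)) ≤
        ∫⁻ u in Set.Ioc (max a (1/(j:ℝ))) b, ENNReal.ofReal ((warpSeq h j u)⁻¹) := by
      apply lintegral_mono_ae
      rw [ae_restrict_iff' measurableSet_Ioc]
      filter_upwards with u hu
      have hul : 1 / (j:ℝ) < u := lt_of_le_of_lt (le_max_right _ _) hu.1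
      have : warpSeq h j u = 1 := by
        unfold warpSeq
        rw [if_neg (not_le.2 hul)]
      rw [this]
      simp
    refine h3.trans ?_
    exact lintegral_mono' (Measure.restrict_mono (Set.Ioc_subset_Ioc_left (le_max_left _ _)) le_rfl) le_rfl

lemma int_le (h₀ : ℝ) (h : ℝ → ℝ)
    (hrange : ∀ t ∈ Set.Icc (0 : ℝ) 1, 1 ≤ h t ∧ h t ≤ h₀)
    (j : ℕ) (hj : 1 ≤ j) (a b : ℝ) (h0 : 0 ≤ a) :
    (∫⁻ u in Set.Ioc a b, ENNReal.ofReal ((warpSeq h j u)⁻¹)) ≤ ENNReal.ofReal (b - a) := by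
  have key : (∫⁻ u in Set.Ioc a b, ENNReal.ofReal ((warpSeq h j u)⁻¹)) ≤
      ∫⁻ _ in Set.Ioc a b, (1 : ℝ≥0∞) := by
    apply lintegral_mono_ae
    rw [ae_restrict_iff' measurableSet_Ioc]
    filter_upwards with u hu
    have hu0 : 0 < u := lt_of_le_of_lt h0 hu.1
    have hone : (1:ℝ≥0∞) = ENNReal.ofReal 1 := by simp
    unfold warpSeq
    split_ifs with huj
    · have hj0 : (0:ℝ) < j := by exact_mod_cast hj
      have hju : (j:ℝ) * u ≤ 1 := by
        rw [mul_comm, ← le_div_iff₀ hj0]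
        exact huj
      have h1 : 1 ≤ h ((j:ℝ) * u) := (hrange _ ⟨by positivity, hju⟩).1
      rw [hone]
      apply ENNReal.ofReal_le_ofReal
      rw [inv_le_one_iff₀]
      right; exact h1
    · simp
  rw [setLIntegral_one, Real.volume_Ioc] at key
  exact key

lemma causal_same {X : Type*} [MetricSpace X] (f : ℝ → ℝ) (a b : ℝ) (hab : a ≤ b) (w : X) :
    WPCausal f (a, w) (b, w) := by
  refine ⟨hab, ?_⟩
  simp [dist_self]

lemma causal_of {X : Type*} [MetricSpace X] (h : ℝ → ℝ) (j : ℕ) (a b : ℝ) (h0 : 0 ≤ a)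
    (w v : X) (hd : dist w v + 1 / j ≤ b - a) :
    WPCausal (warpSeq h j) (a, w) (b, v) := by
  have hd0 : (0:ℝ) ≤ dist w v := dist_nonneg
  have hj0 : (0:ℝ) ≤ 1 / j := by positivity
  refine ⟨by linarith, ?_⟩
  refine le_trans ?_ (int_ge h j a b h0)
  exact ENNReal.ofReal_le_ofReal (by linarith)

/-- Part A: every chain has null length at least `max |Δt| d`. -/
lemma cost_ge {X : Type*} [MetricSpace X] (h₀ : ℝ) (h : ℝ → ℝ)
    (hrange : ∀ t ∈ Set.Icc (0 : ℝ) 1, 1 ≤ h t ∧ h t ≤ h₀)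
    (j : ℕ) (hj : 1 ≤ j) (p q : ℝ × X) (n : ℕ) (σ : ℕ → ℝ × X)
    (hσ : WPChain (Set.Icc 0 2) (warpSeq h j) p q n σ) :
    max |p.1 - q.1| (dist p.2 q.2) ≤ ∑ i ∈ Finset.range (n + 1), |(σ (i + 1)).1 - (σ i).1| := by
  obtain ⟨h0, hn, hmem, hcaus⟩ := hσ
  have step : ∀ i ≤ n, dist (σ i).2 (σ (i+1)).2 ≤ |(σ (i + 1)).1 - (σ i).1| := by
    intro i hi
    have m1 : (0:ℝ) ≤ (σ i).1 := (hmem i (by omega)).1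
    have m2 : (0:ℝ) ≤ (σ (i+1)).1 := (hmem (i+1) (by omega)).1
    rcases hcaus i hi with ⟨hle, hint⟩ | ⟨hle, hint⟩
    · have := hint.trans (int_le h₀ h hrange j hj _ _ m1)
      rw [ENNReal.ofReal_le_ofReal_iff (by linarith)] at this
      rw [abs_of_nonneg (by linarith)]
      linarith
    · have := hint.trans (int_le h₀ h hrange j hj _ _ m2)
      rw [ENNReal.ofReal_le_ofReal_iff (by linarith)] at this
      rw [dist_comm, abs_of_nonpos (by linarith)]
      linarith
  apply max_le
  · have tel : (σ (n+1)).1 - (σ 0).1 = ∑ i ∈ Finset.range (n + 1), ((σ (i+1)).1 - (σ i).1) :=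
      (Finset.sum_range_sub (fun i => (σ i).1) (n+1)).symm
    have : |p.1 - q.1| = |∑ i ∈ Finset.range (n + 1), ((σ (i+1)).1 - (σ i).1)| := by
      rw [← tel, h0, hn, abs_sub_comm]
    rw [this]
    exact le_trans (Finset.abs_sum_le_sum_abs _ _) le_rfl
  · have tri : dist (σ 0).2 (σ (n+1)).2 ≤
        ∑ i ∈ Finset.range (n + 1), dist (σ i).2 (σ (i+1)).2 :=
      dist_le_range_sum_dist (fun i => (σ i).2) (n+1)
    rw [← h0, ← hn]
    refine tri.trans (Finset.sum_le_sum ?_)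
    intro i hi
    exact step i (by simpa using Nat.lt_succ_iff.1 (Finset.mem_range.1 hi))

/-- symmetry of nullDist -/
lemma nullDist_symm {X : Type*} [MetricSpace X] (I : Set ℝ) (f : ℝ → ℝ) (p q : ℝ × X) :
    nullDist I f p q = nullDist I f q p := by
  have key : ∀ p q : ℝ × X, { r | ∃ n σ, WPChain I f p q n σ ∧
      r = ∑ i ∈ Finset.range (n + 1), |(σ (i + 1)).1 - (σ i).1| } ⊆
      { r | ∃ n σ, WPChain I f q p n σ ∧
      r = ∑ i ∈ Finset.range (n + 1), |(σ (i + 1)).1 - (σ i).1| } := by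
    rintro p q r ⟨n, σ, ⟨h0, hn, hmem, hcaus⟩, hr⟩
    refine ⟨n, fun i => σ (n + 1 - i), ⟨by simpa using hn, by simpa using h0, ?_, ?_⟩, ?_⟩
    · intro i hi
      exact hmem _ (by omega)
    · intro i hi
      have e1 : n + 1 - i = (n - i) + 1 := by omega
      have e2 : n + 1 - (i + 1) = n - i := by omega
      simp only []
      show WPCausal f (σ (n + 1 - i)) (σ (n + 1 - (i+1))) ∨
        WPCausal f (σ (n + 1 - (i+1))) (σ (n + 1 - i))
      rw [e1, e2]
      exact (hcaus (n - i) (by omega)).symm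
    · rw [hr]
      have := Finset.sum_range_reflect (fun i => |(σ (i + 1)).1 - (σ i).1|) (n + 1)
      rw [← this]
      apply Finset.sum_congr rfl
      intro i hi
      have hi' : i ≤ n := by simpa using Nat.lt_succ_iff.1 (Finset.mem_range.1 hi)
      have e1 : n + 1 - (i + 1) = n - i := by omega
      have e2 : n + 1 - i = (n - i) + 1 := by omega
      have e3 : n + 1 - 1 - i = n - i := by omega
      show |(σ (n + 1 - 1 - i + 1)).1 - (σ (n + 1 - 1 - i)).1| =
        |(σ (n + 1 - (i+1))).1 - (σ (n + 1 - i)).1|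
      rw [e1, e2, e3, abs_sub_comm]
  unfold nullDist
  rw [Set.Subset.antisymm (key p q) (key q p)]
lemma subdiv {X : Type*} [MetricSpace X]
    (hX : ∀ x y : X, ∀ ε : ℝ, 0 < ε →
      ∃ z : X, max (dist x z) (dist z y) ≤ dist x y / 2 + ε) :
    ∀ (k : ℕ) (δ : ℝ), 0 < δ → ∀ x y : X, ∃ z : ℕ → X, z 0 = x ∧ z (2 ^ k) = y ∧
      ∀ i < 2 ^ k, dist (z i) (z (i + 1)) ≤ dist x y / 2 ^ k + δ := by
  intro k
  induction k with
  | zero =>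
    intro δ hδ x y
    refine ⟨fun i => if i = 0 then x else y, by simp, by simp, ?_⟩
    intro i hi
    interval_cases i
    simp
    linarith [dist_nonneg (x := x) (y := y)]
  | succ k ih =>
    intro δ hδ x y
    obtain ⟨w, hw⟩ := hX x y ((2:ℝ) ^ k * (δ / 2)) (by positivity)
    have hw1 : dist x w ≤ dist x y / 2 + 2 ^ k * (δ / 2) := le_trans (le_max_left _ _) hw
    have hw2 : dist w y ≤ dist x y / 2 + 2 ^ k * (δ / 2) := le_trans (le_max_right _ _) hw
    obtain ⟨z₁, hz10, hz1m, hz1g⟩ := ih (δ / 2) (by positivity) x w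
    obtain ⟨z₂, hz20, hz2m, hz2g⟩ := ih (δ / 2) (by positivity) w y
    refine ⟨fun i => if i < 2 ^ k then z₁ i else z₂ (i - 2 ^ k), ?_, ?_, ?_⟩
    · simp [Nat.pow_pos, hz10]
    · have h1 : ¬ (2 ^ (k+1) < 2 ^ k) := by
        simp only [not_lt]
        exact Nat.pow_le_pow_right (by norm_num) (by omega)
      simp only [if_neg (by omega : ¬ (2 ^ (k+1) < 2 ^ k))]
      have : 2 ^ (k+1) - 2 ^ k = 2 ^ k := by
        have : 2 ^ (k+1) = 2 ^ k + 2 ^ k := by ring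
        omega
      rw [this, hz2m]
    · intro i hi
      have hpow : (0:ℝ) < 2 ^ k := by positivity
      have key : ∀ a : X, dist x a ≤ dist x y / 2 + 2 ^ k * (δ / 2) →
          ∀ b : ℕ → X, True → True := fun _ _ _ _ => trivial
      have bnd1 : dist x w / 2 ^ k + δ / 2 ≤ dist x y / 2 ^ (k+1) + δ := by
        calc dist x w / 2 ^ k + δ / 2 ≤ (dist x y / 2 + 2 ^ k * (δ / 2)) / 2 ^ k + δ/2 := by
              gcongr
          _ = dist x y / (2 ^ k * 2) + δ := by
              field_simp
              ring
          _ = dist x y / 2 ^ (k+1) + δ := by rw [pow_succ]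
      have bnd2 : dist w y / 2 ^ k + δ / 2 ≤ dist x y / 2 ^ (k+1) + δ := by
        calc dist w y / 2 ^ k + δ / 2 ≤ (dist x y / 2 + 2 ^ k * (δ / 2)) / 2 ^ k + δ/2 := by
              gcongr
          _ = dist x y / (2 ^ k * 2) + δ := by
              field_simp
              ring
          _ = dist x y / 2 ^ (k+1) + δ := by rw [pow_succ]
      rcases lt_trichotomy (i + 1) (2 ^ k) with hlt | heq | hgt
      · simp only [if_pos (by omega : i < 2 ^ k), if_pos hlt]
        exact le_trans (hz1g i (by omega)) bnd1
      · have : z₂ ((i+1) - 2 ^ k) = w := by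
          rw [heq]; simp [hz20]
        simp only [if_pos (by omega : i < 2 ^ k), if_neg (by omega : ¬ (i + 1 < 2 ^ k)), this]
        have : w = z₁ (2 ^ k) := hz1m.symm
        rw [this]
        have : i + 1 = 2 ^ k := heq
        rw [← this]
        exact le_trans (hz1g i (by omega)) bnd1
      · have hik : ¬ (i < 2 ^ k) := by omega
        have hik1 : ¬ (i + 1 < 2 ^ k) := by omega
        simp only [if_neg hik, if_neg hik1]
        have e : (i + 1) - 2 ^ k = (i - 2 ^ k) + 1 := by omega
        rw [e]
        have hbound : i - 2 ^ k < 2 ^ k := by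
          have : 2 ^ (k+1) = 2 ^ k + 2 ^ k := by ring
          omega
        exact le_trans (hz2g _ hbound) bnd2

def sig {X : Type*} (s t g e : ℝ) (r m : ℕ) (z : ℕ → X) (y : X) : ℕ → ℝ × X := fun i =>
  if i ≤ r then (s + i * g, z i)
  else if i = r + 1 then (t, z r)
  else if i ≤ m + 1 then (if Even (i - r) then t + e else t, z (i - 1))
  else (t, y)

lemma sig_asc {X : Type*} (s t g e : ℝ) (r m : ℕ) (z : ℕ → X) (y : X) {i : ℕ} (hi : i ≤ r) :
    sig s t g e r m z y i = (s + i * g, z i) := if_pos hi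

lemma sig_vert {X : Type*} (s t g e : ℝ) (r m : ℕ) (z : ℕ → X) (y : X) :
    sig s t g e r m z y (r + 1) = (t, z r) := by
  unfold sig; rw [if_neg (by omega), if_pos rfl]

lemma sig_mid {X : Type*} (s t g e : ℝ) (r m : ℕ) (z : ℕ → X) (y : X) {i : ℕ}
    (h1 : r + 1 < i) (h2 : i ≤ m + 1) :
    sig s t g e r m z y i = (if Even (i - r) then t + e else t, z (i - 1)) := by
  unfold sig; rw [if_neg (by omega), if_neg (by omega), if_pos h2]

lemma sig_last {X : Type*} (s t g e : ℝ) (r m : ℕ) (z : ℕ → X) (y : X) (hrm : r ≤ m) :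
    sig s t g e r m z y (m + 2) = (t, y) := by
  unfold sig; rw [if_neg (by omega), if_neg (by omega), if_neg (by omega)]

lemma chain_exists {X : Type*} [MetricSpace X] (h : ℝ → ℝ) (j : ℕ) (hj : 1 ≤ j)
    (s t : ℝ) (hs0 : 0 ≤ s) (hst : s ≤ t) (ht2 : t ≤ 2)
    (x y : X) (m : ℕ) (hm : 0 < m) (z : ℕ → X) (hz0 : z 0 = x) (hzm : z m = y)
    (G : ℝ) (hG : 0 ≤ G) (hgap : ∀ i < m, dist (z i) (z (i + 1)) ≤ G)
    (g : ℝ) (hgdef : g = G + 1 / j) (hg1 : g ≤ 1) :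
    ∃ c, (∃ n σ, WPChain (Set.Icc 0 2) (warpSeq h j) (s, x) (t, y) n σ ∧
      c = ∑ i ∈ Finset.range (n + 1), |(σ (i + 1)).1 - (σ i).1|) ∧
      c ≤ max (t - s) (m * g) + 2 * g := by
  have hj0 : (0:ℝ) < 1 / j := by
    have : (0:ℝ) < j := by exact_mod_cast hj
    positivity
  have hg0 : 0 < g := by rw [hgdef]; linarith
  set r : ℕ := min m ⌊(t - s) / g⌋₊ with hrdef
  have hrm : r ≤ m := min_le_left _ _
  have hrg : (r:ℝ) * g ≤ t - s := by
    have h1 : (r:ℝ) ≤ ⌊(t - s) / g⌋₊ := by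
      exact_mod_cast min_le_right m _
    have h2 : (⌊(t - s) / g⌋₊ : ℝ) ≤ (t - s) / g := Nat.floor_le (div_nonneg (by linarith) hg0.le)
    have := h1.trans h2
    rwa [le_div_iff₀ hg0] at this
  set e : ℝ := if 1 ≤ t then -g else g with hedef
  have he0 : 0 ≤ t + e := by
    rw [hedef]; split_ifs with het
    · linarith
    · linarith
  have he2 : t + e ≤ 2 := by
    rw [hedef]; split_ifs with het
    · linarith
    · linarith
  have habs1 : |t + e - t| = g := by
    have hee : t + e - t = e := by ring
    rw [hee, hedef]; split_ifs
    · rw [abs_neg, abs_of_nonneg hg0.le]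
    · rw [abs_of_nonneg hg0.le]
  have habs2 : |t - (t + e)| = g := by rw [abs_sub_comm]; exact habs1
  set σ := sig s t g e r m z y with hσdef
  -- the combined per-step fact
  have key : ∀ i ≤ m + 1,
      (WPCausal (warpSeq h j) (σ i) (σ (i + 1)) ∨ WPCausal (warpSeq h j) (σ (i + 1)) (σ i)) ∧
      |(σ (i + 1)).1 - (σ i).1| ≤ (if i = r then t - s - (r:ℝ) * g else g) := by
    intro i hi
    rcases lt_trichotomy i r with hir | hir | hir
    · -- ascent
      have e1 : σ i = (s + i * g, z i) := sig_asc _ _ _ _ _ _ _ _ hir.le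
      have e2 : σ (i + 1) = (s + (i + 1 : ℕ) * g, z (i + 1)) := sig_asc _ _ _ _ _ _ _ _ (by omega)
      have hd : dist (z i) (z (i + 1)) + 1 / j ≤ (s + (i + 1 : ℕ) * g) - (s + i * g) := by
        have := hgap i (by omega)
        push_cast
        rw [hgdef] at *
        linarith
      have h0 : (0:ℝ) ≤ s + i * g := by
        have : (0:ℝ) ≤ (i : ℝ) * g := by positivity
        linarith
      rw [e1, e2]
      constructor
      · exact Or.inl (causal_of h j _ _ h0 _ _ hd)
      · rw [if_neg (by omega)]
        have hd0 := dist_nonneg (x := z i) (y := z (i + 1))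
        rw [abs_of_nonneg (by push_cast; nlinarith)]
        push_cast
        nlinarith
    · -- vertical step
      have e1 : σ i = (s + i * g, z i) := sig_asc _ _ _ _ _ _ _ _ (le_of_eq hir)
      have e2 : σ (i + 1) = (t, z r) := by rw [hir]; exact sig_vert _ _ _ _ _ _ _ _
      rw [e1, e2, hir]
      constructor
      · exact Or.inl (causal_same _ _ _ (by linarith) _)
      · rw [if_pos rfl]
        dsimp
        rw [abs_of_nonneg (by linarith)]
        linarith
    · -- beyond vertical
      rcases Nat.lt_or_ge i (m + 1) with him | him
      · -- i ≤ m : interior sawtooth or first sawtooth step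
        rcases Nat.eq_or_lt_of_le (by omega : r + 1 ≤ i) with hir1 | hir1
        · -- i = r + 1, with r + 1 ≤ m
          subst hir1
          have e1 : σ (r + 1) = (t, z r) := sig_vert _ _ _ _ _ _ _ _
          have e2 : σ (r + 1 + 1) = (t + e, z (r + 1)) := by
            have hmid : σ (r + 1 + 1) =
                (if Even (r + 1 + 1 - r) then t + e else t, z (r + 1 + 1 - 1)) :=
              sig_mid s t g e r m z y (show r + 1 < r + 1 + 1 by omega)
                (show r + 1 + 1 ≤ m + 1 by omega)
            have hev : Even (r + 1 + 1 - r) := by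
              have h2 : r + 1 + 1 - r = 2 := by omega
              rw [h2]; decide
            rw [hmid, if_pos hev, show r + 1 + 1 - 1 = r + 1 from by omega]
          have hd'a := hgap r (by omega)
          have hd'b : dist (z (r + 1)) (z r) ≤ G := by rw [dist_comm]; exact hd'a
          rw [e1, e2]
      -- hd' : dist (z r) (z i) ≤ G  (since z (r+1) = z i)
          constructor
          · rw [hedef]
            split_ifs with het
            · refine Or.inr (causal_of h j _ _ (by linarith) _ _ ?_)
              rw [hgdef] at hg1 ⊢
              linarith
            · refine Or.inl (causal_of h j _ _ (by linarith) _ _ ?_)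
              rw [hgdef] at hg1 ⊢
              linarith
          · rw [if_neg (by omega)]
            dsimp
            exact le_of_eq habs1
        · -- r + 2 ≤ i ≤ m : interior sawtooth
          have e1 : σ i = (if Even (i - r) then t + e else t, z (i - 1)) :=
            sig_mid _ _ _ _ _ _ _ _ hir1 (by omega)
          have e2 : σ (i + 1) = (if Even (i + 1 - r) then t + e else t, z i) := by
            have hmid : σ (i + 1) =
                (if Even (i + 1 - r) then t + e else t, z (i + 1 - 1)) :=
              sig_mid s t g e r m z y (show r + 1 < i + 1 by omega)
                (show i + 1 ≤ m + 1 by omega)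
            rw [hmid, show i + 1 - 1 = i from by omega]
          have hpar : Even (i + 1 - r) ↔ ¬ Even (i - r) := by
            constructor
            · intro h1 h2
              rcases h1 with ⟨a, ha⟩; rcases h2 with ⟨b, hb⟩; omega
            · intro h1
              rcases Nat.even_or_odd (i - r) with h2 | h2
              · exact absurd h2 h1
              · rcases h2 with ⟨a, ha⟩; exact ⟨a + 1, by omega⟩
          have hd'a : dist (z (i - 1)) (z i) ≤ G := by
            have := hgap (i - 1) (by omega)
            have hii : i - 1 + 1 = i := by omega
            rwa [hii] at this
          have hd'b : dist (z i) (z (i - 1)) ≤ G := by rw [dist_comm]; exact hd'a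
          rw [e1, e2]
          constructor
          · by_cases hev : Even (i - r)
            · rw [if_pos hev, if_neg (show ¬ Even (i + 1 - r) from by
                rw [hpar]; exact fun c => c hev)]
              rw [hedef]; split_ifs with het
              · refine Or.inl (causal_of h j _ _ (by linarith) _ _ ?_)
                rw [hgdef] at hg1 ⊢; linarith
              · refine Or.inr (causal_of h j _ _ (by linarith) _ _ ?_)
                rw [hgdef] at hg1 ⊢; linarith
            · rw [if_neg hev, if_pos (hpar.2 hev)]
              rw [hedef]; split_ifs with het
              · refine Or.inr (causal_of h j _ _ (by linarith) _ _ ?_)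
                rw [hgdef] at hg1 ⊢; linarith
              · refine Or.inl (causal_of h j _ _ (by linarith) _ _ ?_)
                rw [hgdef] at hg1 ⊢; linarith
          · by_cases hev : Even (i - r)
            · rw [if_pos hev, if_neg (show ¬ Even (i + 1 - r) from by
                rw [hpar]; exact fun c => c hev), if_neg (show ¬ i = r from by omega)]
              dsimp
              exact le_of_eq habs2
            · rw [if_neg hev, if_pos (hpar.2 hev), if_neg (show ¬ i = r from by omega)]
              dsimp
              exact le_of_eq habs1
      · -- i = m + 1
        have him1 : i = m + 1 := by omega
        subst him1
        have e2 : σ (m + 1 + 1) = (t, y) := sig_last _ _ _ _ _ _ _ _ hrm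
        rcases Nat.eq_or_lt_of_le (by omega : r + 1 ≤ m + 1) with hr1 | hr1
        · -- r = m : last step trivial
          have hrm' : r = m := by omega
          have e1 : σ (m + 1) = (t, z r) := by
            rw [← hr1]; exact sig_vert _ _ _ _ _ _ _ _
          rw [e1, e2, hrm', hzm]
          constructor
          · exact Or.inl (causal_same _ _ _ le_rfl _)
          · rw [if_neg (by omega)]
            dsimp
            simp [hg0.le]
        · -- r < m
          have e1 : σ (m + 1) = (if Even (m + 1 - r) then t + e else t, z m) := by
            have hmid : σ (m + 1) =
                (if Even (m + 1 - r) then t + e else t, z (m + 1 - 1)) :=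
              sig_mid s t g e r m z y (show r + 1 < m + 1 by omega)
                (show m + 1 ≤ m + 1 by omega)
            rw [hmid, show m + 1 - 1 = m from by omega]
          rw [e1, e2, ← hzm]
          constructor
          · by_cases hev : Even (m + 1 - r)
            · rw [if_pos hev, hedef]
              split_ifs with het
              · exact Or.inl (causal_same _ _ _ (by linarith) _)
              · exact Or.inr (causal_same _ _ _ (by linarith) _)
            · rw [if_neg hev]
              exact Or.inl (causal_same _ _ _ le_rfl _)
          · by_cases hev : Even (m + 1 - r)
            · rw [if_pos hev, if_neg (show ¬ m + 1 = r from by omega)]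
              dsimp
              exact le_of_eq habs2
            · rw [if_neg hev, if_neg (show ¬ m + 1 = r from by omega)]
              dsimp
              simp [hg0.le]
  -- assemble the chain
  refine ⟨_, ⟨m + 1, σ, ⟨?_, ?_, ?_, fun i hi => (key i hi).1⟩, rfl⟩, ?_⟩
  · have : σ 0 = (s + (0:ℕ) * g, z 0) := sig_asc _ _ _ _ _ _ _ _ (Nat.zero_le r)
    rw [this, hz0]
    norm_num
  · exact sig_last _ _ _ _ _ _ _ _ hrm
  · -- membership
    intro i hi
    rcases le_or_gt i r with h1 | h1
    · have e1 : σ i = (s + i * g, z i) := sig_asc _ _ _ _ _ _ _ _ h1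
      rw [e1]
      constructor
      · have : (0:ℝ) ≤ (i:ℝ) * g := by positivity
        dsimp; linarith
      · have hc : (i:ℝ) ≤ r := by exact_mod_cast h1
        have : (i:ℝ) * g ≤ (r:ℝ) * g := by nlinarith
        dsimp; linarith
    · rcases eq_or_lt_of_le (by omega : r + 1 ≤ i) with h2 | h2
      · have e1 : σ i = (t, z r) := by rw [← h2]; exact sig_vert _ _ _ _ _ _ _ _
        rw [e1]
        exact ⟨by dsimp; linarith, by dsimp; linarith⟩
      · rcases le_or_gt i (m + 1) with h3 | h3
        · have e1 : σ i = (if Even (i - r) then t + e else t, z (i - 1)) :=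
            sig_mid _ _ _ _ _ _ _ _ h2 h3
          rw [e1]
          dsimp
          split_ifs
          · exact ⟨he0, he2⟩
          · exact ⟨by linarith, by linarith⟩
        · have h4 : i = m + 2 := by omega
          have e1 : σ i = (t, y) := by rw [h4]; exact sig_last _ _ _ _ _ _ _ _ hrm
          rw [e1]
          exact ⟨by dsimp; linarith, by dsimp; linarith⟩
  · -- the cost bound
    have hsum : ∑ i ∈ Finset.range (m + 1 + 1), |(σ (i + 1)).1 - (σ i).1| ≤
        ∑ i ∈ Finset.range (m + 2), (if i = r then t - s - (r:ℝ) * g else g) := by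
      apply Finset.sum_le_sum
      intro i hi
      exact (key i (by simpa using Nat.lt_succ_iff.1 (Finset.mem_range.1 hi))).2
    have hsum2 : ∑ i ∈ Finset.range (m + 2), (if i = r then t - s - (r:ℝ) * g else g) =
        (m + 2 : ℝ) * g + (t - s - (r:ℝ) * g - g) := by
      have hcong : ∀ i ∈ Finset.range (m + 2),
          (if i = r then t - s - (r:ℝ) * g else g) =
          g + (if i = r then (t - s - (r:ℝ) * g - g) else 0) := by
        intro i _
        split_ifs <;> ring
      rw [Finset.sum_congr rfl hcong, Finset.sum_add_distrib, Finset.sum_const,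
        Finset.sum_ite_eq' (Finset.range (m + 2)) r (fun _ => t - s - (r:ℝ) * g - g),
        if_pos (Finset.mem_range.2 (by omega)), Finset.card_range]
      push_cast
      ring
    refine le_trans hsum (le_trans (le_of_eq hsum2) ?_)
    rcases eq_or_lt_of_le hrm with hreq | hrlt
    · -- r = m
      have hc : (r:ℝ) = m := by exact_mod_cast hreq
      rw [← hc]
      have hmax := le_max_left (t - s) ((r:ℝ) * g)
      have := hg0.le
      clear_value σ e r
      linarith
    · -- r < m, so r = ⌊(t-s)/g⌋
      have hfl : r = ⌊(t - s) / g⌋₊ := by omega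
      have hlt : t - s < ((r:ℝ) + 1) * g := by
        have h1 : (t - s) / g < (⌊(t - s) / g⌋₊ : ℝ) + 1 := Nat.lt_floor_add_one _
        rw [← hfl] at h1
        rwa [div_lt_iff₀ hg0] at h1
      have hmr : (r:ℝ) * g ≤ (m:ℝ) * g :=
        mul_le_mul_of_nonneg_right (by exact_mod_cast hrm) hg0.le
      have hmax := le_max_right (t - s) ((m:ℝ) * g)
      clear_value σ e r
      linarith

/-- uniform convergence of the warping functions is not necessary: for the
warping functions `f_j` built from a nonincreasing `h` with `h ≡ h₀ > 1` on `[0,1/2]`,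
`h(1) = 1`, the null distances of `[0,2] ×_{f_j} X` converge uniformly to the null
distance of the Lorentzian product, `d̂_σ((s,x),(t,y)) = max(|s−t|, d(x,y))`. -/
theorem stmt17 {X : Type*} [MetricSpace X] [CompactSpace X]
    (hX : ∀ x y : X, ∀ ε : ℝ, 0 < ε →
      ∃ z : X, max (dist x z) (dist z y) ≤ dist x y / 2 + ε)
    (h₀ : ℝ) (hh₀ : 1 < h₀)
    (h : ℝ → ℝ)
    (hcont : ContinuousOn h (Set.Icc 0 1))
    (hanti : AntitoneOn h (Set.Icc 0 1))
    (hval : ∀ t ∈ Set.Icc (0 : ℝ) (1 / 2), h t = h₀)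
    (hone : h 1 = 1)
    (hrange : ∀ t ∈ Set.Icc (0 : ℝ) 1, 1 ≤ h t ∧ h t ≤ h₀) :
    ∀ ε : ℝ, 0 < ε → ∃ N : ℕ, ∀ j ≥ N, ∀ p q : ℝ × X,
      p.1 ∈ Set.Icc (0 : ℝ) 2 → q.1 ∈ Set.Icc (0 : ℝ) 2 →
      |nullDist (Set.Icc 0 2) (warpSeq h j) p q -
        max |p.1 - q.1| (dist p.2 q.2)| ≤ ε := by
  intro ε hε
  classical
  obtain ⟨D, hDdef⟩ : ∃ D : ℝ, D = Metric.diam (Set.univ : Set X) := ⟨_, rfl⟩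
  have hD0 : 0 ≤ D := hDdef ▸ Metric.diam_nonneg
  have hdistD : ∀ x y : X, dist x y ≤ D := fun x y => hDdef ▸
    Metric.dist_le_diam_of_mem (isCompact_univ.isBounded) (Set.mem_univ x) (Set.mem_univ y)
  have hcpos : (0:ℝ) < min (1/4) (ε/8) := lt_min (by norm_num) (by positivity)
  obtain ⟨k, hk⟩ := pow_unbounded_of_one_lt (R := ℝ) (D / min (1/4) (ε/8)) one_lt_two
  obtain ⟨m, hmdef⟩ : ∃ m : ℕ, m = 2 ^ k := ⟨_, rfl⟩
  have hm0 : 0 < m := by rw [hmdef]; exact Nat.pow_pos (by norm_num)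
  have hmcast : ((m:ℕ):ℝ) = (2:ℝ) ^ k := by rw [hmdef]; push_cast; norm_num
  have hmR : (0:ℝ) < (m:ℝ) := by exact_mod_cast hm0
  have hDm : D / (m:ℝ) ≤ min (1/4) (ε/8) := by
    rw [div_le_iff₀ hmR, hmcast]
    rw [div_lt_iff₀ hcpos] at hk
    refine le_of_lt ?_
    calc D < 2 ^ k * min (1/4) (ε/8) := hk
      _ = min (1/4) (ε/8) * 2 ^ k := by ring
  have hDm4 : D / (m:ℝ) ≤ 1/4 := hDm.trans (min_le_left _ _)
  have hDm8 : D / (m:ℝ) ≤ ε/8 := hDm.trans (min_le_right _ _)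
  obtain ⟨δ, hδdef⟩ : ∃ δ : ℝ, δ = min (1/8) (ε / (8 * (m:ℝ) + 16)) := ⟨_, rfl⟩
  have hδ0 : 0 < δ := hδdef ▸ lt_min (by norm_num) (by positivity)
  have hδ18 : δ ≤ 1/8 := hδdef ▸ min_le_left _ _
  have hδε : ((m:ℝ) + 2) * δ ≤ ε/8 := by
    have h1 : δ ≤ ε / (8 * (m:ℝ) + 16) := hδdef ▸ min_le_right _ _
    have h2 : ((m:ℝ) + 2) * δ ≤ ((m:ℝ) + 2) * (ε / (8 * (m:ℝ) + 16)) :=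
      mul_le_mul_of_nonneg_left h1 (by positivity)
    refine h2.trans (le_of_eq ?_)
    have hne : (8 * (m:ℝ) + 16) ≠ 0 := by positivity
    field_simp
    ring
  refine ⟨max 4 (⌈4 * ((m:ℝ) + 2) / ε⌉₊ + 1), ?_⟩
  intro j hj p q hp hq
  have hj4 : 4 ≤ j := le_trans (le_max_left _ _) hj
  have hj1 : 1 ≤ j := by omega
  have hjR : (0:ℝ) < (j:ℝ) := by exact_mod_cast (by omega : 0 < j)
  have hj14 : (1:ℝ)/(j:ℝ) ≤ 1/4 := by
    apply one_div_le_one_div_of_le (by norm_num)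
    exact_mod_cast hj4
  have hjm : ((m:ℝ) + 2) / (j:ℝ) ≤ ε/4 := by
    have h1 : 4 * ((m:ℝ) + 2) / ε ≤ (j:ℝ) := by
      have h2 : (4 * ((m:ℝ) + 2) / ε) ≤ (⌈4 * ((m:ℝ) + 2) / ε⌉₊ : ℝ) := Nat.le_ceil _
      have h3 : (⌈4 * ((m:ℝ) + 2) / ε⌉₊ : ℝ) + 1 ≤ (j:ℝ) := by
        have h4 : ⌈4 * ((m:ℝ) + 2) / ε⌉₊ + 1 ≤ j := le_trans (le_max_right _ _) hj
        exact_mod_cast h4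
      linarith
    rw [div_le_iff₀ hjR]
    have h4 := mul_le_mul_of_nonneg_left h1 (by positivity : (0:ℝ) ≤ ε/4)
    calc (m:ℝ) + 2 = ε/4 * (4 * ((m:ℝ) + 2) / ε) := by field_simp
      _ ≤ ε/4 * (j:ℝ) := h4
  -- the core estimate for time-ordered pairs
  have core : ∀ s t : ℝ, ∀ x y : X, s ∈ Set.Icc (0:ℝ) 2 → t ∈ Set.Icc (0:ℝ) 2 → s ≤ t →
      |nullDist (Set.Icc 0 2) (warpSeq h j) (s, x) (t, y) - max |s - t| (dist x y)| ≤ ε := by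
    intro s t x y hs ht hst
    obtain ⟨z, hz0, hzk, hzg⟩ := subdiv hX k δ hδ0 x y
    have hzm : z m = y := by rw [hmdef]; exact hzk
    obtain ⟨G, hGdef⟩ : ∃ G : ℝ, G = dist x y / (m:ℝ) + δ := ⟨_, rfl⟩
    have hdxy : (0:ℝ) ≤ dist x y := dist_nonneg
    have hdm' : (0:ℝ) ≤ dist x y / (m:ℝ) := by positivity
    have hG0 : 0 ≤ G := by rw [hGdef]; linarith
    obtain ⟨g, hgdef⟩ : ∃ g : ℝ, g = G + 1/(j:ℝ) := ⟨_, rfl⟩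
    have hdD : dist x y ≤ D := hdistD x y
    have hdm : dist x y / (m:ℝ) ≤ D / (m:ℝ) := by gcongr
    have hg1 : g ≤ 1 := by
      rw [hgdef, hGdef]
      linarith
    have hgap : ∀ i < m, dist (z i) (z (i + 1)) ≤ G := by
      intro i hi
      rw [hmdef] at hi
      have h5 := hzg i hi
      rw [hGdef, hmcast]
      exact h5
    obtain ⟨c, hcmem, hcle⟩ := chain_exists h j hj1 s t hs.1 hst ht.2 x y m hm0 z hz0
      hzm G hG0 hgap g hgdef hg1
    have hbdd : BddBelow { r | ∃ n σ, WPChain (Set.Icc 0 2) (warpSeq h j) (s, x) (t, y) n σ ∧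
        r = ∑ i ∈ Finset.range (n + 1), |(σ (i + 1)).1 - (σ i).1| } := by
      refine ⟨0, ?_⟩
      rintro b ⟨n, σ, _, hb⟩
      rw [hb]
      exact Finset.sum_nonneg fun i _ => abs_nonneg _
    have hlow : max |s - t| (dist x y) ≤ nullDist (Set.Icc 0 2) (warpSeq h j) (s, x) (t, y) := by
      refine le_csInf ⟨c, hcmem⟩ ?_
      rintro b ⟨n, σ, hσ, hb⟩
      rw [hb]
      exact cost_ge h₀ h hrange j hj1 (s, x) (t, y) n σ hσ
    have hupp : nullDist (Set.Icc 0 2) (warpSeq h j) (s, x) (t, y) ≤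
        max (t - s) ((m:ℝ) * g) + 2 * g := le_trans (csInf_le hbdd hcmem) hcle
    have hmg : (m:ℝ) * g = dist x y + (m:ℝ) * δ + (m:ℝ) / (j:ℝ) := by
      rw [hgdef, hGdef]
      field_simp
    have hmd0 : (0:ℝ) ≤ (m:ℝ) * δ := by positivity
    have hmj0 : (0:ℝ) ≤ (m:ℝ) / (j:ℝ) := by positivity
    have hmax2 : max (t - s) ((m:ℝ) * g) ≤
        max (t - s) (dist x y) + ((m:ℝ) * δ + (m:ℝ)/(j:ℝ)) := by
      apply max_le
      · have h1 := le_max_left (t - s) (dist x y)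
        linarith
      · have h1 := le_max_right (t - s) (dist x y)
        linarith [hmg]
    have habs : |s - t| = t - s := by
      rw [abs_sub_comm, abs_of_nonneg (by linarith)]
    have herr : (m:ℝ) * δ + (m:ℝ)/(j:ℝ) + 2 * g ≤ ε := by
      have hg_le : g ≤ D/(m:ℝ) + δ + 1/(j:ℝ) := by
        rw [hgdef, hGdef]
        linarith
      have e4 : (m:ℝ)/(j:ℝ) + 2 * (1/(j:ℝ)) = ((m:ℝ) + 2)/(j:ℝ) := by
        field_simp
      linarith [hδε, hjm, hDm8]
    rw [habs, abs_le]
    rw [habs] at hlow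
    constructor
    · linarith
    · linarith
  rcases le_total p.1 q.1 with hpq | hpq
  · have hco := core p.1 q.1 p.2 q.2 hp hq hpq
    simpa using hco
  · have hco := core q.1 p.1 q.2 p.2 hq hp hpq
    rw [nullDist_symm, abs_sub_comm p.1 q.1, dist_comm p.2 q.2]
    simpa using hco
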